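/- The group defined by the presentation ⟨h, x | h⁶, x² h³ x⁻¹ h⟩ (the quotient of the free group on two generators h, x by the normal closure of the relators h⁶ and x² h³ x⁻¹ h) is finite of order 54. -/

import Mathlib

set_option maxRecDepth 100000
set_option maxHeartbeats 1000000

/-- The relators `h⁶` and `x² h³ x⁻¹ h` in the free group on two generators
`h = of 0`, `x = of 1`. -/
def stmt19Rels : Set (FreeGroup (Fin 2)) :=
  {FreeGroup.of 0 ^ 6,
   FreeGroup.of 1 ^ 2 * FreeGroup.of 0 ^ 3 * (FreeGroup.of 1)⁻¹ * FreeGroup.of 0}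

namespace Stmt19

abbrev P := PresentedGroup stmt19Rels

def hh : P := PresentedGroup.of 0
def xx : P := PresentedGroup.of 1

lemma mk_rel_one {r : FreeGroup (Fin 2)} (hr : r ∈ stmt19Rels) :
    PresentedGroup.mk stmt19Rels r = 1 :=
  (QuotientGroup.eq_one_iff r).mpr (Subgroup.subset_normalClosure hr)

lemma h6 : hh ^ 6 = 1 := by
  have := mk_rel_one (Set.mem_insert _ _)
  rw [map_pow] at this
  exact this

lemma rel1 : xx ^ 2 * hh ^ 3 * xx⁻¹ * hh = 1 := by
  have := mk_rel_one (Set.mem_insert_of_mem _ rfl)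
  rw [map_mul, map_mul, map_mul, map_pow, map_pow, map_inv] at this
  exact this

lemma e3 : hh ^ 3 = xx⁻¹ * xx⁻¹ * hh⁻¹ * xx := by
  calc hh ^ 3 = xx⁻¹ * xx⁻¹ * (xx ^ 2 * hh ^ 3 * xx⁻¹ * hh) * hh⁻¹ * xx := by group
  _ = xx⁻¹ * xx⁻¹ * hh⁻¹ * xx := by rw [rel1]; group

lemma e5 : hh ^ 3 = xx⁻¹ * hh * xx ^ 2 := by
  have h33 : hh ^ 3 = (hh ^ 3)⁻¹ := by
    calc hh ^ 3 = (hh ^ 3)⁻¹ * hh ^ 6 := by group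
    _ = (hh ^ 3)⁻¹ := by rw [h6, mul_one]
  calc hh ^ 3 = (hh ^ 3)⁻¹ := h33
  _ = (xx⁻¹ * xx⁻¹ * hh⁻¹ * xx)⁻¹ := by rw [e3]
  _ = xx⁻¹ * hh * xx ^ 2 := by group

lemma e7 : xx * hh * xx = hh⁻¹ := by
  have h25 := e3.symm.trans e5
  calc xx * hh * xx = xx ^ 2 * (xx⁻¹ * hh * xx ^ 2) * xx⁻¹ * xx⁻¹ * xx := by group
  _ = xx ^ 2 * (xx⁻¹ * xx⁻¹ * hh⁻¹ * xx) * xx⁻¹ * xx⁻¹ * xx := by rw [← h25]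
  _ = hh⁻¹ := by group

lemma e8 : xx * hh ^ 2 * xx ^ 2 = hh ^ 2 := by
  calc xx * hh ^ 2 * xx ^ 2 = (xx * hh * xx) * (xx⁻¹ * hh * xx ^ 2) := by
        simp [pow_two, mul_assoc]
  _ = hh⁻¹ * (xx⁻¹ * hh * xx ^ 2) := by rw [e7]
  _ = hh⁻¹ * hh ^ 3 := by rw [← e5]
  _ = hh ^ 2 := by group

lemma c2 : xx * hh ^ 2 = hh ^ 2 * xx⁻¹ * xx⁻¹ := by
  calc xx * hh ^ 2 = (xx * hh ^ 2 * xx ^ 2) * xx⁻¹ * xx⁻¹ := by group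
  _ = hh ^ 2 * xx⁻¹ * xx⁻¹ := by rw [e8]

lemma s1 : (hh ^ 2)⁻¹ * xx * hh ^ 2 = xx⁻¹ * xx⁻¹ := by
  calc (hh ^ 2)⁻¹ * xx * hh ^ 2 = (hh ^ 2)⁻¹ * (xx * hh ^ 2) := by group
  _ = (hh ^ 2)⁻¹ * (hh ^ 2 * xx⁻¹ * xx⁻¹) := by rw [c2]
  _ = xx⁻¹ * xx⁻¹ := by group

lemma x9 : xx ^ 9 = 1 := by
  have E : (hh ^ 6)⁻¹ * xx * hh ^ 6 =
      (xx⁻¹ * xx⁻¹) * (xx⁻¹ * xx⁻¹) * ((xx⁻¹ * xx⁻¹) * (xx⁻¹ * xx⁻¹)) := by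
    calc (hh ^ 6)⁻¹ * xx * hh ^ 6
        = (hh ^ 2)⁻¹ * ((hh ^ 2)⁻¹ * ((hh ^ 2)⁻¹ * xx * hh ^ 2) * hh ^ 2) * hh ^ 2 := by group
    _ = (hh ^ 2)⁻¹ * ((hh ^ 2)⁻¹ * (xx⁻¹ * xx⁻¹) * hh ^ 2) * hh ^ 2 := by rw [s1]
    _ = (hh ^ 2)⁻¹ * (((hh ^ 2)⁻¹ * xx * hh ^ 2)⁻¹ * ((hh ^ 2)⁻¹ * xx * hh ^ 2)⁻¹) * hh ^ 2 := by
        group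
    _ = (hh ^ 2)⁻¹ * ((xx⁻¹ * xx⁻¹)⁻¹ * (xx⁻¹ * xx⁻¹)⁻¹) * hh ^ 2 := by rw [s1]
    _ = ((hh ^ 2)⁻¹ * xx * hh ^ 2) * ((hh ^ 2)⁻¹ * xx * hh ^ 2) * (((hh ^ 2)⁻¹ * xx * hh ^ 2) *
          ((hh ^ 2)⁻¹ * xx * hh ^ 2)) := by simp [pow_two, mul_assoc]
    _ = (xx⁻¹ * xx⁻¹) * (xx⁻¹ * xx⁻¹) * ((xx⁻¹ * xx⁻¹) * (xx⁻¹ * xx⁻¹)) := by rw [s1]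
  rw [h6] at E
  have E' : xx = (xx⁻¹ * xx⁻¹) * (xx⁻¹ * xx⁻¹) * ((xx⁻¹ * xx⁻¹) * (xx⁻¹ * xx⁻¹)) := by
    simpa using E
  have E2 := congrArg (· * xx ^ 8) E'
  calc xx ^ 9 = xx * xx ^ 8 := by group
  _ = (xx⁻¹ * xx⁻¹) * (xx⁻¹ * xx⁻¹) * ((xx⁻¹ * xx⁻¹) * (xx⁻¹ * xx⁻¹)) * xx ^ 8 := by exact E2
  _ = 1 := by group

lemma hinv : hh⁻¹ = hh ^ 5 := by
  calc hh⁻¹ = hh ^ 5 * (hh ^ 6)⁻¹ := by group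
  _ = hh ^ 5 := by rw [h6]; group

lemma xinv : xx⁻¹ = xx ^ 8 := by
  calc xx⁻¹ = xx ^ 8 * (xx ^ 9)⁻¹ := by group
  _ = xx ^ 8 := by rw [x9]; group

lemma xmod (a b : ℕ) (hab : a % 9 = b % 9) : xx ^ a = xx ^ b := by
  rw [pow_eq_pow_mod a x9, pow_eq_pow_mod b x9, hab]

lemma C1 : xx * hh ^ 1 = hh ^ 5 * xx ^ 8 := by
  have c1' : xx * hh = hh⁻¹ * xx⁻¹ := by
    calc xx * hh = (xx * hh * xx) * xx⁻¹ := by group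
    _ = hh⁻¹ * xx⁻¹ := by rw [e7]
  calc xx * hh ^ 1 = xx * hh := by group
  _ = hh⁻¹ * xx⁻¹ := c1'
  _ = hh ^ 5 * xx ^ 8 := by rw [hinv, xinv]

lemma C2 : xx * hh ^ 2 = hh ^ 2 * xx ^ 7 := by
  calc xx * hh ^ 2 = hh ^ 2 * xx⁻¹ * xx⁻¹ := c2
  _ = hh ^ 2 * xx ^ 8 * xx ^ 8 := by rw [xinv]
  _ = hh ^ 2 * xx ^ (8 + 8) := by rw [mul_assoc, ← pow_add]
  _ = hh ^ 2 * xx ^ 7 := by rw [xmod (8 + 8) 7 (by norm_num)]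

lemma C3 : xx * hh ^ 3 = hh ^ 1 * xx ^ 2 := by
  have : xx * hh ^ 3 = xx * (xx⁻¹ * hh * xx ^ 2) := by rw [← e5]
  rw [this]; group

lemma c2' : xx⁻¹ * hh ^ 2 = hh ^ 2 * xx ^ 2 := by
  calc xx⁻¹ * hh ^ 2 = hh ^ 2 * (xx * hh ^ 2)⁻¹ * hh ^ 2 := by group
  _ = hh ^ 2 * (hh ^ 2 * xx⁻¹ * xx⁻¹)⁻¹ * hh ^ 2 := by rw [c2]
  _ = hh ^ 2 * xx ^ 2 := by group

lemma C4 : xx * hh ^ 4 = hh ^ 4 * xx ^ 4 := by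
  calc xx * hh ^ 4 = (xx * hh ^ 2) * hh ^ 2 := by group
  _ = hh ^ 2 * xx⁻¹ * (xx⁻¹ * hh ^ 2) := by rw [c2]; group
  _ = hh ^ 2 * xx⁻¹ * (hh ^ 2 * xx ^ 2) := by rw [c2']
  _ = hh ^ 2 * (xx⁻¹ * hh ^ 2) * xx ^ 2 := by group
  _ = hh ^ 2 * (hh ^ 2 * xx ^ 2) * xx ^ 2 := by rw [c2']
  _ = hh ^ 4 * xx ^ 4 := by group

lemma C5 : xx * hh ^ 5 = hh ^ 3 * xx ^ 5 := by
  have i4 : (xx ^ 4)⁻¹ = xx ^ 5 := by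
    calc (xx ^ 4)⁻¹ = xx ^ 5 * (xx ^ 9)⁻¹ := by group
    _ = xx ^ 5 := by rw [x9]; group
  calc xx * hh ^ 5 = (xx * hh ^ 3) * hh ^ 2 := by group
  _ = hh ^ 1 * xx * (xx * hh ^ 2) := by
        rw [C3]
        simp [pow_two, mul_assoc]
  _ = hh ^ 1 * xx * (hh ^ 2 * xx⁻¹ * xx⁻¹) := by rw [c2]
  _ = hh ^ 1 * (xx * hh ^ 2) * xx⁻¹ * xx⁻¹ := by group
  _ = hh ^ 1 * (hh ^ 2 * xx⁻¹ * xx⁻¹) * xx⁻¹ * xx⁻¹ := by rw [c2]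
  _ = hh ^ 3 * (xx ^ 4)⁻¹ := by group
  _ = hh ^ 3 * xx ^ 5 := by rw [i4]

/-- The commutation step: move `xx` past `hh ^ k`. -/
lemma xstep (k : ℕ) (hk : k < 6) (j : ℕ) :
    ∃ a, a < 6 ∧ ∃ b, b < 9 ∧ xx * (hh ^ k * xx ^ j) = hh ^ a * xx ^ b := by
  interval_cases k
  · refine ⟨0, by norm_num, (1 + j) % 9, Nat.mod_lt _ (by norm_num), ?_⟩
    calc xx * (hh ^ 0 * xx ^ j) = hh ^ 0 * xx ^ (1 + j) := by
          rw [pow_zero, one_mul, one_mul, pow_add, pow_one]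
    _ = hh ^ 0 * xx ^ ((1 + j) % 9) := by rw [xmod (1 + j) ((1 + j) % 9) (by omega)]
  · refine ⟨5, by norm_num, (8 + j) % 9, Nat.mod_lt _ (by norm_num), ?_⟩
    calc xx * (hh ^ 1 * xx ^ j) = (xx * hh ^ 1) * xx ^ j := by rw [mul_assoc]
    _ = hh ^ 5 * xx ^ 8 * xx ^ j := by rw [C1]
    _ = hh ^ 5 * xx ^ (8 + j) := by rw [mul_assoc, ← pow_add]
    _ = hh ^ 5 * xx ^ ((8 + j) % 9) := by rw [xmod (8 + j) ((8 + j) % 9) (by omega)]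
  · refine ⟨2, by norm_num, (7 + j) % 9, Nat.mod_lt _ (by norm_num), ?_⟩
    calc xx * (hh ^ 2 * xx ^ j) = (xx * hh ^ 2) * xx ^ j := by rw [mul_assoc]
    _ = hh ^ 2 * xx ^ 7 * xx ^ j := by rw [C2]
    _ = hh ^ 2 * xx ^ (7 + j) := by rw [mul_assoc, ← pow_add]
    _ = hh ^ 2 * xx ^ ((7 + j) % 9) := by rw [xmod (7 + j) ((7 + j) % 9) (by omega)]
  · refine ⟨1, by norm_num, (2 + j) % 9, Nat.mod_lt _ (by norm_num), ?_⟩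
    calc xx * (hh ^ 3 * xx ^ j) = (xx * hh ^ 3) * xx ^ j := by rw [mul_assoc]
    _ = hh ^ 1 * xx ^ 2 * xx ^ j := by rw [C3]
    _ = hh ^ 1 * xx ^ (2 + j) := by rw [mul_assoc, ← pow_add]
    _ = hh ^ 1 * xx ^ ((2 + j) % 9) := by rw [xmod (2 + j) ((2 + j) % 9) (by omega)]
  · refine ⟨4, by norm_num, (4 + j) % 9, Nat.mod_lt _ (by norm_num), ?_⟩
    calc xx * (hh ^ 4 * xx ^ j) = (xx * hh ^ 4) * xx ^ j := by rw [mul_assoc]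
    _ = hh ^ 4 * xx ^ 4 * xx ^ j := by rw [C4]
    _ = hh ^ 4 * xx ^ (4 + j) := by rw [mul_assoc, ← pow_add]
    _ = hh ^ 4 * xx ^ ((4 + j) % 9) := by rw [xmod (4 + j) ((4 + j) % 9) (by omega)]
  · refine ⟨3, by norm_num, (5 + j) % 9, Nat.mod_lt _ (by norm_num), ?_⟩
    calc xx * (hh ^ 5 * xx ^ j) = (xx * hh ^ 5) * xx ^ j := by rw [mul_assoc]
    _ = hh ^ 3 * xx ^ 5 * xx ^ j := by rw [C5]
    _ = hh ^ 3 * xx ^ (5 + j) := by rw [mul_assoc, ← pow_add]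
    _ = hh ^ 3 * xx ^ ((5 + j) % 9) := by rw [xmod (5 + j) ((5 + j) % 9) (by omega)]

def Ffun : Fin 6 × Fin 9 → P := fun p => hh ^ (p.1 : ℕ) * xx ^ (p.2 : ℕ)

lemma one_mem : (1 : P) ∈ Set.range Ffun :=
  ⟨(0, 0), by simp [Ffun]⟩

lemma stepH : ∀ q ∈ Set.range Ffun, hh * q ∈ Set.range Ffun := by
  rintro _ ⟨⟨i, j⟩, rfl⟩
  refine ⟨(⟨(1 + (i : ℕ)) % 6, Nat.mod_lt _ (by norm_num)⟩, j), ?_⟩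
  show hh ^ ((1 + (i : ℕ)) % 6) * xx ^ (j : ℕ) = hh * (hh ^ (i : ℕ) * xx ^ (j : ℕ))
  rw [← pow_eq_pow_mod _ h6, pow_add, pow_one, mul_assoc]

lemma stepX : ∀ q ∈ Set.range Ffun, xx * q ∈ Set.range Ffun := by
  rintro _ ⟨⟨i, j⟩, rfl⟩
  obtain ⟨a, ha, b, hb, heq⟩ := xstep (i : ℕ) i.isLt (j : ℕ)
  exact ⟨(⟨a, ha⟩, ⟨b, hb⟩), heq.symm⟩

lemma surj : Function.Surjective Ffun := by
  intro p
  suffices h : p ∈ Set.range Ffun by exact h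
  have key : ∀ w : FreeGroup (Fin 2), ∀ q ∈ Set.range Ffun,
      (PresentedGroup.mk stmt19Rels w) * q ∈ Set.range Ffun := by
    intro w
    induction w using FreeGroup.induction_on with
    | C1 => intro q hq; simpa using hq
    | of i =>
      fin_cases i
      · exact stepH
      · exact stepX
    | inv_of i _ =>
      intro q hq
      fin_cases i
      · show hh⁻¹ * q ∈ Set.range Ffun
        have e : hh⁻¹ * q = hh * (hh * (hh * (hh * (hh * q)))) := by
          rw [hinv]
          simp [pow_succ, pow_zero, one_mul, mul_assoc]
        rw [e]
        exact stepH _ (stepH _ (stepH _ (stepH _ (stepH _ hq))))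
      · show xx⁻¹ * q ∈ Set.range Ffun
        have e : xx⁻¹ * q = xx * (xx * (xx * (xx * (xx * (xx * (xx * (xx * q))))))) := by
          rw [xinv]
          simp [pow_succ, pow_zero, one_mul, mul_assoc]
        rw [e]
        exact stepX _ (stepX _ (stepX _ (stepX _ (stepX _ (stepX _ (stepX _ (stepX _ hq)))))))
    | mul w1 w2 ih1 ih2 =>
      intro q hq
      have h2 := ih1 _ (ih2 q hq)
      rw [map_mul, mul_assoc]
      exact h2
  obtain ⟨w, rfl⟩ := PresentedGroup.mk_surjective stmt19Rels p
  simpa using key w 1 one_mem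

/-! ### Lower bound via an explicit permutation representation of degree 54 -/

def hP : Equiv.Perm (Fin 54) where
  toFun := ![2, 0, 8, 11, 6, 1, 18, 16, 15, 24, 3, 28, 21, 4, 33, 5, 36, 35, 37, 26, 7, 23, 42, 9, 30, 14, 10, 17, 19, 49, 12, 47, 13, 22, 46, 52, 51, 32, 50, 34, 20, 31, 45, 27, 39, 25, 38, 48, 29, 41, 44, 40, 53, 43]
  invFun := ![1, 5, 0, 10, 13, 15, 4, 20, 2, 23, 26, 3, 30, 32, 25, 8, 7, 27, 6, 28, 40, 12, 33, 21, 9, 45, 19, 43, 11, 48, 24, 41, 37, 14, 39, 17, 16, 18, 46, 44, 51, 49, 22, 53, 50, 42, 34, 31, 47, 29, 38, 36, 35, 52]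
  left_inv := by decide
  right_inv := by decide

def xP : Equiv.Perm (Fin 54) where
  toFun := ![4, 7, 10, 0, 14, 17, 1, 21, 23, 2, 27, 30, 3, 29, 34, 33, 5, 26, 28, 6, 38, 41, 8, 20, 45, 9, 44, 47, 48, 11, 50, 12, 16, 13, 52, 15, 37, 46, 18, 19, 35, 42, 53, 22, 24, 49, 25, 36, 43, 32, 40, 31, 51, 39]
  invFun := ![3, 6, 9, 12, 0, 16, 19, 1, 22, 25, 2, 29, 31, 33, 4, 35, 32, 5, 38, 39, 23, 7, 43, 8, 44, 46, 17, 10, 18, 13, 11, 51, 49, 15, 14, 40, 47, 36, 20, 53, 50, 21, 41, 48, 26, 24, 37, 27, 28, 45, 30, 52, 34, 42]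
  left_inv := by decide
  right_inv := by decide

def pf : Fin 2 → Equiv.Perm (Fin 54) := ![hP, xP]

lemma pf_rels : ∀ r ∈ stmt19Rels, FreeGroup.lift pf r = 1 := by
  intro r hr
  rcases hr with rfl | rfl
  · rw [map_pow, FreeGroup.lift_apply_of]
    show hP ^ 6 = 1
    refine Equiv.ext ?_
    decide
  · rw [map_mul, map_mul, map_mul, map_pow, map_pow, map_inv,
      FreeGroup.lift_apply_of, FreeGroup.lift_apply_of]
    show xP ^ 2 * hP ^ 3 * xP⁻¹ * hP = 1
    refine Equiv.ext ?_
    decide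

def phi : P →* Equiv.Perm (Fin 54) := PresentedGroup.toGroup pf_rels

lemma phi_h : phi hh = hP := by
  show PresentedGroup.toGroup pf_rels (PresentedGroup.of 0) = hP
  rw [PresentedGroup.toGroup.of]
  rfl

lemma phi_x : phi xx = xP := by
  show PresentedGroup.toGroup pf_rels (PresentedGroup.of 1) = xP
  rw [PresentedGroup.toGroup.of]
  rfl

def tbl : Fin 6 × Fin 9 → Fin 54 := fun p =>
  ![![0, 4, 14, 34, 52, 51, 31, 12, 3],
    ![2, 6, 33, 46, 53, 40, 47, 21, 11],
    ![8, 18, 22, 38, 43, 20, 48, 23, 28],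
    ![15, 37, 42, 50, 27, 7, 29, 9, 19],
    ![5, 32, 45, 44, 17, 16, 49, 24, 26],
    ![1, 13, 25, 39, 35, 36, 41, 30, 10]] p.1 p.2

lemma eval_tbl : ∀ p : Fin 6 × Fin 9, (hP ^ (p.1 : ℕ) * xP ^ (p.2 : ℕ)) 0 = tbl p := by
  decide

lemma tbl_inj : Function.Injective tbl := by decide

lemma inj : Function.Injective Ffun := by
  intro a b hab
  have h1 : hP ^ (a.1 : ℕ) * xP ^ (a.2 : ℕ) = hP ^ (b.1 : ℕ) * xP ^ (b.2 : ℕ) := by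
    have := congrArg phi hab
    simpa [Ffun, map_mul, map_pow, phi_h, phi_x] using this
  have h2 : tbl a = tbl b := by
    rw [← eval_tbl a, ← eval_tbl b, h1]
  exact tbl_inj h2

end Stmt19

/-- The group `⟨h, x | h⁶, x² h³ x⁻¹ h⟩` is finite of order `54`. -/
theorem stmt_19 : Nat.card (PresentedGroup stmt19Rels) = 54 := by
  have hb : Function.Bijective Stmt19.Ffun := ⟨Stmt19.inj, Stmt19.surj⟩
  rw [← Nat.card_eq_of_bijective Stmt19.Ffun hb]
  simp
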